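/- Under Assumptions (A1) and (A2): for all x, y ∈ V there exists a unique element b(x, y) ∈ V such that Δ(ι(x))·Δ(ι(y)) − Δ(ι(y))·Δ(ι(x)) = Δ(ι(b(x, y))); moreover the map (x, y) ↦ b(x, y) is k-bilinear, alternating, and satisfies the Jacobi identity, hence defines a Lie algebra bracket on V. -/

import Mathlib

/-- `Sym_n ⊆ T(V)`: the `k`-span of the symmetrized tensor monomials
`Σ_{s ∈ S_n} ι(v_{s(1)})⋯ι(v_{s(n)})` with `v₁,…,vₙ ∈ V`. -/
noncomputable def symSubmodule (k : Type*) [Field k] (V : Type*) [AddCommGroup V] [Module k V]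
    (n : ℕ) : Submodule k (TensorAlgebra k V) :=
  Submodule.span k
    {u : TensorAlgebra k V | ∃ v : Fin n → V,
      u = ∑ s : Equiv.Perm (Fin n),
        (List.ofFn fun i : Fin n => TensorAlgebra.ι k (v (s i))).prod}

section aux
variable (k : Type*) [Field k] (V : Type*) [AddCommGroup V] [Module k V]

lemma ι_mem_sym_one (x : V) : TensorAlgebra.ι k x ∈ symSubmodule k V 1 :=
  Submodule.subset_span ⟨fun _ => x, by simp⟩

lemma symle_one :
    (⨆ m, ⨆ _ : m ≤ 1, symSubmodule k V m) ≤
      Submodule.span k {1} ⊔ LinearMap.range (TensorAlgebra.ι k (M := V)) := by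
  refine iSup_le fun m => iSup_le fun hm => ?_
  interval_cases m
  · refine le_trans ?_ le_sup_left
    refine Submodule.span_le.2 ?_
    rintro u ⟨v, rfl⟩
    simpa using Submodule.mem_span_singleton_self (1 : TensorAlgebra k V)
  · refine le_trans ?_ le_sup_right
    refine Submodule.span_le.2 ?_
    rintro u ⟨v, rfl⟩
    simp only [SetLike.mem_coe, LinearMap.mem_range]
    exact ⟨v 0, by simp⟩

end aux

/-- Let `k` be a field of characteristic zero, `V` a `k`-vector space,
`A` a unital associative `k`-algebra with augmentation `ε : A → k` and an algebra map
`Δ : T(V) → A` with `ε(Δ(ι v)) = 0`.  Under Assumption (A1) (the restriction of `Δ` to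
`S = Σ_n Sym_n` is a bijection onto `A`) and Assumption (A2) (for `p ≥ 1`, the difference
between `Δ(ι(v₁)⋯ι(v_p))` and its symmetrization lies in `Δ(S^{≤ p−1})`): for all `x, y ∈ V`
there is a unique `b(x,y) ∈ V` with `Δ(ι x)·Δ(ι y) − Δ(ι y)·Δ(ι x) = Δ(ι(b(x,y)))`; moreover
`b` is `k`-bilinear, alternating and satisfies the Jacobi identity, hence is a Lie bracket. -/
theorem stmt_15 (k : Type*) [Field k] [CharZero k] (V : Type*) [AddCommGroup V] [Module k V]
    (A : Type*) [Ring A] [Algebra k A]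
    (ε : A →ₐ[k] k) (Δ : TensorAlgebra k V →ₐ[k] A)
    (hε : ∀ v : V, ε (Δ (TensorAlgebra.ι k v)) = 0)
    (hA1 : ∀ a : A, ∃! s : TensorAlgebra k V,
      s ∈ (⨆ n : ℕ, symSubmodule k V n) ∧ Δ s = a)
    (hA2 : ∀ (p : ℕ) (v : Fin (p + 1) → V),
      Δ ((List.ofFn fun i : Fin (p + 1) => TensorAlgebra.ι k (v i)).prod)
          - algebraMap ℚ k ((Nat.factorial (p + 1) : ℚ)⁻¹) •
              ∑ s : Equiv.Perm (Fin (p + 1)),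
                Δ ((List.ofFn fun i : Fin (p + 1) => TensorAlgebra.ι k (v (s i))).prod)
        ∈ Submodule.map Δ.toLinearMap (⨆ m, ⨆ _ : m ≤ p, symSubmodule k V m)) :
    ∃ b : V → V → V,
      (∀ x y : V,
        Δ (TensorAlgebra.ι k x) * Δ (TensorAlgebra.ι k y)
            - Δ (TensorAlgebra.ι k y) * Δ (TensorAlgebra.ι k x)
          = Δ (TensorAlgebra.ι k (b x y))) ∧
      (∀ x y c : V,
        Δ (TensorAlgebra.ι k x) * Δ (TensorAlgebra.ι k y)
            - Δ (TensorAlgebra.ι k y) * Δ (TensorAlgebra.ι k x)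
          = Δ (TensorAlgebra.ι k c) → c = b x y) ∧
      (∀ (c : k) (x x' y : V), b (c • x + x') y = c • b x y + b x' y) ∧
      (∀ (c : k) (x y y' : V), b x (c • y + y') = c • b x y + b x y') ∧
      (∀ x : V, b x x = 0) ∧
      (∀ x y z : V, b (b x y) z + b (b y z) x + b (b z x) y = 0) := by
  classical
  set ιk := TensorAlgebra.ι k (M := V) with hιk
  -- injectivity of Δ ∘ ι
  have hinj : ∀ u v : V, Δ (ιk u) = Δ (ιk v) → u = v := by
    intro u v h
    obtain ⟨s, -, huniq⟩ := hA1 (Δ (ιk v))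
    have h1 : ιk u = s :=
      huniq _ ⟨(le_iSup (symSubmodule k V) 1) (ι_mem_sym_one k V u), h⟩
    have h2 : ιk v = s :=
      huniq _ ⟨(le_iSup (symSubmodule k V) 1) (ι_mem_sym_one k V v), rfl⟩
    exact (TensorAlgebra.ι_inj k u v).mp (h1.trans h2.symm)
  -- existence
  have hex : ∀ x y : V, ∃ c : V,
      Δ (ιk x) * Δ (ιk y) - Δ (ιk y) * Δ (ιk x) = Δ (ιk c) := by
    intro x y
    have h := hA2 1 ![x, y]
    set M := Submodule.map Δ.toLinearMap (⨆ m, ⨆ _ : m ≤ 1, symSubmodule k V m) with hM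
    have hsum : (∑ s : Equiv.Perm (Fin 2),
        Δ ((List.ofFn fun i : Fin 2 => TensorAlgebra.ι k (![x, y] (s i))).prod))
        = Δ (ιk x * ιk y) + Δ (ιk y * ιk x) := by
      rw [show Finset.univ (α := Equiv.Perm (Fin 2)) = {1, Equiv.swap 0 1} by decide,
        Finset.sum_pair (by decide)]
      simp [List.ofFn_succ, hιk]
    rw [hsum] at h
    have hprod : (List.ofFn fun i : Fin 2 => TensorAlgebra.ι k (![x, y] i)).prod
        = ιk x * ιk y := by simp [List.ofFn_succ, hιk]
    rw [hprod] at h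
    have h2 := M.smul_mem (2 : k) h
    have key : Δ (ιk x) * Δ (ιk y) - Δ (ιk y) * Δ (ιk x) ∈ M := by
      have hq : (2 : k) • (algebraMap ℚ k ((Nat.factorial 2 : ℚ)⁻¹) •
          (Δ (ιk x * ιk y) + Δ (ιk y * ιk x)))
          = Δ (ιk x * ιk y) + Δ (ιk y * ιk x) := by
        rw [smul_smul]
        have : (2 : k) * algebraMap ℚ k ((Nat.factorial 2 : ℚ)⁻¹) = 1 := by
          rw [show (2 : k) = algebraMap ℚ k 2 by simp, ← map_mul]
          norm_num [Nat.factorial]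
        rw [this, one_smul]
      have heq : Δ (ιk x) * Δ (ιk y) - Δ (ιk y) * Δ (ιk x)
          = (2 : k) • (Δ (ιk x * ιk y) - algebraMap ℚ k ((Nat.factorial 2 : ℚ)⁻¹) •
              (Δ (ιk x * ιk y) + Δ (ιk y * ιk x))) := by
        rw [smul_sub, hq, map_mul, map_mul, two_smul]
        abel
      rw [heq]; exact h2
    obtain ⟨t, ht, hΔt⟩ := key
    have ht' := symle_one k V ht
    obtain ⟨p, hp, q, hq, hpq⟩ := Submodule.mem_sup.mp ht'
    obtain ⟨r, rfl⟩ := Submodule.mem_span_singleton.mp hp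
    obtain ⟨c, rfl⟩ := hq
    refine ⟨c, ?_⟩
    have hΔt' : Δ (ιk x) * Δ (ιk y) - Δ (ιk y) * Δ (ιk x)
        = r • (1 : A) + Δ (ιk c) := by
      rw [← hΔt, ← hpq]; simp [hιk]
    have hr : r = 0 := by
      have hε0 : ε (Δ (ιk x) * Δ (ιk y) - Δ (ιk y) * Δ (ιk x)) = 0 := by
        simp [map_sub, map_mul, hε]
      rw [hΔt'] at hε0
      simpa [hε, Algebra.smul_def] using hε0
    rw [hΔt', hr, zero_smul, zero_add]
  choose b hb using hex
  have huniq : ∀ x y c : V,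
      Δ (ιk x) * Δ (ιk y) - Δ (ιk y) * Δ (ιk x) = Δ (ιk c) → c = b x y := by
    intro x y c h
    exact hinj c (b x y) (h.symm.trans (hb x y))
  refine ⟨b, hb, huniq, ?_, ?_, ?_, ?_⟩
  · intro c x x' y
    refine (huniq _ _ _ ?_).symm
    simp only [hιk, map_add, map_smul, add_mul, mul_add, smul_mul_assoc, mul_smul_comm, smul_sub,
      ← hb]
    rw [← hιk, ← hb, ← hb, smul_sub]
    abel
  · intro c x y y'
    refine (huniq _ _ _ ?_).symm
    simp only [hιk, map_add, map_smul, add_mul, mul_add, smul_mul_assoc, mul_smul_comm, smul_sub,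
      ← hb]
    rw [← hιk, ← hb, ← hb, smul_sub]
    abel
  · intro x
    refine (huniq x x 0 ?_).symm
    simp
  · intro x y z
    refine hinj _ 0 ?_
    simp only [hιk, map_add, map_zero]
    rw [← hb, ← hb, ← hb, ← hb, ← hb, ← hb]
    noncomm_ring
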